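/- arXiv:2109.12208 — 2 statements merged into one kernel-verified Lean document; each statement's English description precedes it below -/
import Mathlib

section
/- Let W_X = X ⊔ Z and W_Y = Y ⊔ Z' be controlled compactifications of proper metric spaces (X, d_X) and (Y, d_Y), and let f: X → Y be a proper continuous map admitting a continuous extension f̄: W_X → W_Y. Then: (i) f̄(Z) ⊆ Z'; (ii) any two continuous extensions of f to W_X → W_Y agree; and (iii) every continuous map f': X → Y which is boundedly close to f (i.e., sup_{x∈X} d_Y(f(x), f'(x)) < ∞) extends continuously to W_X → W_Y by setting the extension equal to f̄ on Z. -/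
open Set Topology TopologicalSpace unitInterval

/-- A closed subset `Z` of a space `W` is a `Z`-set if there is a homotopy
`α : W × [0,1] → W` with `α₀ = id` and `α t W ⊆ W ∖ Z` for `t > 0`. -/
def IsZSet {W : Type} [TopologicalSpace W] (Z : Set W) : Prop :=
  IsClosed Z ∧
    ∃ α : C(W × unitInterval, W),
      (∀ w, α (w, 0) = w) ∧ ∀ t : unitInterval, t ≠ 0 → ∀ w, α (w, t) ∉ Z

/-- The suspension identifications on `Z × [0,1]`. -/
def suspSetoid (Z : Type) : Setoid (Z × unitInterval) where
  r p q := p = q ∨ (p.2 = q.2 ∧ (p.2 = 0 ∨ p.2 = 1))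
  iseqv := by
    refine ⟨fun p => Or.inl rfl, ?_, ?_⟩
    · rintro p q (rfl | ⟨h, h01⟩)
      · exact Or.inl rfl
      · exact Or.inr ⟨h.symm, h ▸ h01⟩
    · rintro p q r (rfl | ⟨h, h01⟩) (rfl | ⟨h', h01'⟩)
      · exact Or.inl rfl
      · exact Or.inr ⟨h', h01'⟩
      · exact Or.inr ⟨h, h01⟩
      · exact Or.inr ⟨h.trans h', h01⟩

/-- The (unreduced) suspension of a space. -/
abbrev Susp (Z : Type) [TopologicalSpace Z] : Type := Quotient (suspSetoid Z)

/-- A (metrizable) compactification of a locally compact separable metrizable space: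
a compact metrizable space containing it as a dense open subspace. -/
structure Compactification (X : Type) [TopologicalSpace X] where
  W : Type
  [topW : TopologicalSpace W]
  ι : X → W
  emb : Topology.IsOpenEmbedding ι
  dense : Dense (Set.range ι)
  compactW : CompactSpace W
  metrizableW : TopologicalSpace.MetrizableSpace W

attribute [instance] Compactification.topW

/-- The remainder of a compactification. -/
def Compactification.remainder {X : Type} [TopologicalSpace X]
    (c : Compactification X) : Set c.W :=
  (Set.range c.ι)ᶜ

/-- A `Z`-compactification: the remainder is a `Z`-set. -/
def Compactification.IsZComp {X : Type} [TopologicalSpace X]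
    (c : Compactification X) : Prop :=
  IsZSet c.remainder

/-- A controlled compactification of a proper metric space: for every `R > 0` and every
open cover `𝒰` of `W`, there is a compact `C ⊆ X` such that every subset of `X ∖ C` of
diameter `< R` lies in a member of `𝒰`. -/
def Compactification.Controlled {X : Type} [MetricSpace X]
    (c : Compactification X) : Prop :=
  ∀ R : ℝ, 0 < R →
    ∀ 𝒰 : Set (Set c.W), (∀ U ∈ 𝒰, IsOpen U) → ⋃₀ 𝒰 = Set.univ →
      ∃ C : Set X, IsCompact C ∧
        ∀ A : Set X, A ⊆ Cᶜ → EMetric.diam A < ENNReal.ofReal R →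
          ∃ U ∈ 𝒰, c.ι '' A ⊆ U

/-- Let `W_X = X ⊔ Z` and `W_Y = Y ⊔ Z'` be controlled
compactifications of proper metric spaces and `f : X → Y` a proper continuous map with a
continuous extension `F : W_X → W_Y`. Then (i) `F` maps the remainder `Z` into `Z'`;
(ii) the continuous extension of `f` is unique; and (iii) every continuous `f' : X → Y`
boundedly close to `f` extends continuously to `W_X → W_Y`, agreeing with `F` on `Z`. -/
theorem controlled_compactification_extension
    (X Y : Type) [MetricSpace X] [MetricSpace Y] [ProperSpace X] [ProperSpace Y]
    (cX : Compactification X) (cY : Compactification Y)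
    (hcX : cX.Controlled) (hcY : cY.Controlled)
    (f : X → Y) (hf : Continuous f)
    (hfproper : ∀ K : Set Y, IsCompact K → IsCompact (f ⁻¹' K))
    (F : cX.W → cY.W) (hF : Continuous F) (hFext : ∀ x : X, F (cX.ι x) = cY.ι (f x)) :
    (F '' cX.remainder ⊆ cY.remainder) ∧
    (∀ F' : cX.W → cY.W, Continuous F' →
      (∀ x : X, F' (cX.ι x) = cY.ι (f x)) → F' = F) ∧
    (∀ f' : X → Y, Continuous f' → (∃ C : ℝ, ∀ x : X, dist (f x) (f' x) ≤ C) →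
      ∃ F' : cX.W → cY.W, Continuous F' ∧
        (∀ x : X, F' (cX.ι x) = cY.ι (f' x)) ∧
        ∀ z ∈ cX.remainder, F' z = F z) := by
  haveI := cX.compactW; haveI := cY.compactW
  haveI := cX.metrizableW; haveI := cY.metrizableW
  letI : MetricSpace cY.W := TopologicalSpace.metrizableSpaceMetric cY.W
  have hinjX : Function.Injective cX.ι := cX.emb.injective
  -- For z in the remainder, the comap filter is nontrivial
  have hneBot : ∀ z ∈ cX.remainder, (Filter.comap cX.ι (𝓝 z)).NeBot := by
    intro z hz
    rw [Filter.comap_neBot_iff]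
    intro t ht
    obtain ⟨w, hw1, x, rfl⟩ := mem_closure_iff_nhds.1 (cX.dense z) t ht
    exact ⟨x, hw1⟩
  -- f tends to cocompact along the comap filter
  have hcoc : ∀ z ∈ cX.remainder,
      Filter.Tendsto f (Filter.comap cX.ι (𝓝 z)) (Filter.cocompact Y) := by
    intro z hz
    rw [Filter.hasBasis_cocompact.tendsto_right_iff]
    intro K hK
    have h1 : IsCompact (cX.ι '' (f ⁻¹' K)) := (hfproper K hK).image cX.emb.continuous
    have h2 : (cX.ι '' (f ⁻¹' K))ᶜ ∈ 𝓝 z :=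
      h1.isClosed.isOpen_compl.mem_nhds (fun ⟨x, _, hx2⟩ => hz ⟨x, hx2⟩)
    filter_upwards [Filter.preimage_mem_comap h2] with x hx
    exact fun hxK => hx ⟨x, hxK, rfl⟩
  -- ι_Y ∘ f tends to F z along the comap filter
  have hB : ∀ z ∈ cX.remainder,
      Filter.Tendsto (fun x => cY.ι (f x)) (Filter.comap cX.ι (𝓝 z)) (𝓝 (F z)) := by
    intro z hz
    have h1 : Filter.Tendsto (F ∘ cX.ι) (Filter.comap cX.ι (𝓝 z)) (𝓝 (F z)) :=
      (hF.tendsto z).comp Filter.tendsto_comap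
    simpa only [Function.comp_def, hFext] using h1
  -- (i)
  have hi : F '' cX.remainder ⊆ cY.remainder := by
    rintro _ ⟨z, hz, rfl⟩ ⟨y, hy⟩
    haveI := hneBot z hz
    have h2 : Filter.Tendsto f (Filter.comap cX.ι (𝓝 z)) (𝓝 y) := by
      rw [cY.emb.tendsto_nhds_iff]
      simpa only [Function.comp_def, hy] using hB z hz
    have h4 : ∀ᶠ x in Filter.comap cX.ι (𝓝 z), f x ∈ Metric.closedBall y 1 :=
      h2 (Metric.closedBall_mem_nhds y one_pos)
    have h5 : ∀ᶠ x in Filter.comap cX.ι (𝓝 z), f x ∈ (Metric.closedBall y 1)ᶜ :=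
      (Filter.hasBasis_cocompact.tendsto_right_iff.1 (hcoc z hz)) _
        (isCompact_closedBall y 1)
    obtain ⟨x, hx1, hx2⟩ := (h4.and h5).exists
    exact hx2 hx1
  refine ⟨hi, ?_, ?_⟩
  · -- (ii) uniqueness
    intro F' hF' hF'ext
    refine Continuous.ext_on cX.dense hF' hF ?_
    rintro _ ⟨x, rfl⟩
    rw [hF'ext, hFext]
  · -- (iii)
    rintro f' hf' ⟨C, hC⟩
    set C' : ℝ := max C 0 with hC'
    set g : cX.W → cY.W := Function.extend cX.ι (fun x => cY.ι (f' x)) F with hg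
    have hg1 : ∀ x, g (cX.ι x) = cY.ι (f' x) := fun x => hinjX.extend_apply _ _ x
    have hg2 : ∀ z ∈ cX.remainder, g z = F z := fun z hz =>
      Function.extend_apply' _ _ _ (fun ⟨x, hx⟩ => hz ⟨x, hx⟩)
    -- key: ι_Y ∘ f' also tends to F z
    have hkey : ∀ z ∈ cX.remainder,
        Filter.Tendsto (fun x => cY.ι (f' x)) (Filter.comap cX.ι (𝓝 z)) (𝓝 (F z)) := by
      intro z hz
      haveI := hneBot z hz
      have hp : F z ∈ cY.remainder := hi ⟨z, hz, rfl⟩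
      rw [tendsto_nhds]
      intro V hV hpV
      obtain ⟨V', hV'o, hpV', hclV'⟩ :=
        normal_exists_closure_subset (isClosed_singleton (x := F z)) hV
          (Set.singleton_subset_iff.2 hpV)
      have hpV'' : F z ∈ V' := hpV' rfl
      set 𝒰 : Set (Set cY.W) := {V, (closure V')ᶜ} with h𝒰
      have hopen : ∀ U ∈ 𝒰, IsOpen U := by
        rintro U (rfl | rfl)
        · exact hV
        · exact isClosed_closure.isOpen_compl
      have hcov : ⋃₀ 𝒰 = Set.univ := by
        ext w
        simp only [h𝒰, Set.sUnion_insert, Set.sUnion_singleton, Set.mem_union,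
          Set.mem_compl_iff, Set.mem_univ, iff_true]
        by_cases hw : w ∈ closure V'
        · exact Or.inl (hclV' hw)
        · exact Or.inr hw
      obtain ⟨C₀, hC₀c, hC₀⟩ := hcY (C' + 1)
        (by positivity) 𝒰 hopen hcov
      have hK : IsCompact (Metric.cthickening C' C₀) := hC₀c.cthickening
      have e1 : ∀ᶠ x in Filter.comap cX.ι (𝓝 z), f x ∉ Metric.cthickening C' C₀ :=
        (Filter.hasBasis_cocompact.tendsto_right_iff.1 (hcoc z hz)) _ hK
      have e2 : ∀ᶠ x in Filter.comap cX.ι (𝓝 z), cY.ι (f x) ∈ V' :=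
        (hB z hz) (hV'o.mem_nhds hpV'')
      filter_upwards [e1, e2] with x hx1 hx2
      have hfx : f x ∉ C₀ := fun h =>
        hx1 (Metric.self_subset_cthickening C₀ h)
      have hf'x : f' x ∉ C₀ := fun h =>
        hx1 (Metric.mem_cthickening_of_dist_le (f x) (f' x) C' C₀ h
          ((hC x).trans (le_max_left _ _)))
      have hA : ({f x, f' x} : Set Y) ⊆ C₀ᶜ := by
        rintro y (rfl | rfl) <;> assumption
      have hdiam : EMetric.diam ({f x, f' x} : Set Y) < ENNReal.ofReal (C' + 1) := by
        rw [show EMetric.diam ({f x, f' x} : Set Y) = edist (f x) (f' x) from EMetric.diam_pair,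
          edist_dist]
        calc ENNReal.ofReal (dist (f x) (f' x)) ≤ ENNReal.ofReal C' :=
              ENNReal.ofReal_le_ofReal ((hC x).trans (le_max_left _ _))
          _ < ENNReal.ofReal (C' + 1) := by
              rw [ENNReal.ofReal_lt_ofReal_iff (by positivity)]
              linarith
      obtain ⟨U, hU, hAU⟩ := hC₀ _ hA hdiam
      rcases hU with rfl | rfl
      · exact hAU ⟨f' x, by simp, rfl⟩
      · exact absurd (subset_closure hx2) (hAU ⟨f x, by simp, rfl⟩)
    -- continuity of g
    have hgc : Continuous g := by
      rw [continuous_iff_continuousAt]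
      intro w
      by_cases hw : w ∈ Set.range cX.ι
      · obtain ⟨x, rfl⟩ := hw
        unfold ContinuousAt
        rw [← cX.emb.map_nhds_eq x, Filter.tendsto_map'_iff]
        have hco : (g ∘ cX.ι) = fun x => cY.ι (f' x) := funext hg1
        rw [hco, hg1]
        exact (cY.emb.continuous.comp hf').continuousAt
      · have hz : w ∈ cX.remainder := hw
        unfold ContinuousAt
        rw [hg2 w hz]
        have hsplit : 𝓝 w =
            (𝓝 w ⊓ Filter.principal (Set.range cX.ι)) ⊔
              (𝓝 w ⊓ Filter.principal (Set.range cX.ι)ᶜ) := by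
          rw [← inf_sup_left, Filter.sup_principal, Set.union_compl_self,
            Filter.principal_univ, inf_top_eq]
        rw [hsplit, Filter.tendsto_sup]
        constructor
        · rw [← Filter.map_comap, Filter.tendsto_map'_iff]
          have hco : (g ∘ cX.ι) = fun x => cY.ι (f' x) := funext hg1
          rw [hco]
          exact hkey w hz
        · have hFg : g =ᶠ[𝓝 w ⊓ Filter.principal (Set.range cX.ι)ᶜ] F := by
            rw [Filter.eventuallyEq_inf_principal_iff]
            exact Filter.Eventually.of_forall fun w' hw' => hg2 w' hw'
          exact ((hF.tendsto w).mono_left inf_le_left).congr' hFg.symm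
    exact ⟨g, hgc, hg1, hg2⟩
end

section
/- Let A₁, A₂ > 0 and B₁, B₂ ∈ ℝ, and let θ: [0,∞) → [0,∞) be a differentiable monotone increasing function such that θ(x) → ∞ as x → ∞ and θ'(x) ≤ 1 for all sufficiently large x. Then lim_{x→∞} θ(log(A₁x + B₁)) / θ(log(A₂x + B₂)) = 1. -/
open Filter Real Set

/-- Let `A₁, A₂ > 0`, `B₁, B₂ ∈ ℝ`, and let `θ : [0,∞) → [0,∞)` be a
differentiable monotone increasing function with `θ(x) → ∞` and `θ'(x) ≤ 1` for all
sufficiently large `x`. Then `θ(log(A₁x + B₁)) / θ(log(A₂x + B₂)) → 1` as `x → ∞`. -/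
theorem tendsto_theta_log_ratio
    (A₁ A₂ B₁ B₂ : ℝ) (hA₁ : 0 < A₁) (hA₂ : 0 < A₂)
    (θ : ℝ → ℝ) (hθ0 : ∀ x, 0 ≤ x → 0 ≤ θ x)
    (hθdiff : DifferentiableOn ℝ θ (Set.Ici 0))
    (hθmono : MonotoneOn θ (Set.Ici 0))
    (hθtop : Filter.Tendsto θ Filter.atTop Filter.atTop)
    (hθderiv : ∃ M : ℝ, ∀ x, M ≤ x → deriv θ x ≤ 1) :
    Filter.Tendsto
      (fun x : ℝ => θ (Real.log (A₁ * x + B₁)) / θ (Real.log (A₂ * x + B₂)))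
      Filter.atTop (nhds 1) := by
  obtain ⟨M, hM⟩ := hθderiv
  set M' : ℝ := max M 1 with hM'def
  have hM'pos : (0:ℝ) < M' := lt_of_lt_of_le one_pos (le_max_right _ _)
  -- key 1-Lipschitz estimate beyond M'
  have key : ∀ u v, M' ≤ u → u ≤ v → θ v - θ u ≤ v - u := by
    intro u v hu huv
    rcases eq_or_lt_of_le huv with rfl | hlt
    · simp
    · have hsub1 : Icc u v ⊆ Ici (0:ℝ) := fun z hz => le_trans hM'pos.le (hu.trans hz.1)
      obtain ⟨c, hc, hc'⟩ := exists_deriv_eq_slope θ hlt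
        (hθdiff.continuousOn.mono hsub1)
        (hθdiff.mono (fun z hz => hsub1 (Ioo_subset_Icc_self hz)))
      have hcM : M ≤ c := le_trans (le_max_left _ _) (hu.trans hc.1.le)
      have := hM c hcM
      rw [hc'] at this
      have hvu : (0:ℝ) < v - u := sub_pos.2 hlt
      calc θ v - θ u = (θ v - θ u) / (v - u) * (v - u) := by field_simp
        _ ≤ 1 * (v - u) := by exact mul_le_mul_of_nonneg_right this hvu.le
        _ = v - u := one_mul _
  have key2 : ∀ u v, M' ≤ u → M' ≤ v → |θ u - θ v| ≤ |u - v| := by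
    intro u v hu hv
    have hu0 : (0:ℝ) ≤ u := hM'pos.le.trans hu
    have hv0 : (0:ℝ) ≤ v := hM'pos.le.trans hv
    rcases le_total u v with h | h
    · rw [abs_sub_comm, abs_sub_comm u v,
        abs_of_nonneg (sub_nonneg.2 (hθmono hu0 hv0 h)),
        abs_of_nonneg (sub_nonneg.2 h)]
      exact key u v hu h
    · rw [abs_of_nonneg (sub_nonneg.2 (hθmono hv0 hu0 h)),
        abs_of_nonneg (sub_nonneg.2 h)]
      exact key v u hv h
  -- affine maps tend to atTop
  have haff1 : Tendsto (fun x : ℝ => A₁ * x + B₁) atTop atTop :=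
    tendsto_atTop_add_const_right _ B₁ (Tendsto.const_mul_atTop hA₁ tendsto_id)
  have haff2 : Tendsto (fun x : ℝ => A₂ * x + B₂) atTop atTop :=
    tendsto_atTop_add_const_right _ B₂ (Tendsto.const_mul_atTop hA₂ tendsto_id)
  have hlog1 : Tendsto (fun x : ℝ => Real.log (A₁ * x + B₁)) atTop atTop :=
    Real.tendsto_log_atTop.comp haff1
  have hlog2 : Tendsto (fun x : ℝ => Real.log (A₂ * x + B₂)) atTop atTop :=
    Real.tendsto_log_atTop.comp haff2
  set f : ℝ → ℝ := fun x => θ (Real.log (A₁ * x + B₁)) with hf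
  set g : ℝ → ℝ := fun x => θ (Real.log (A₂ * x + B₂)) with hg
  have hgtop : Tendsto g atTop atTop := hθtop.comp hlog2
  -- the difference of logs tends to log (A₁/A₂)
  have hr : Tendsto (fun x : ℝ => (A₁ * x + B₁) / (A₂ * x + B₂)) atTop
      (nhds (A₁ / A₂)) := by
    have hb1 : Tendsto (fun x : ℝ => B₁ / x) atTop (nhds 0) :=
      Tendsto.div_atTop tendsto_const_nhds tendsto_id
    have hb2 : Tendsto (fun x : ℝ => B₂ / x) atTop (nhds 0) :=
      Tendsto.div_atTop tendsto_const_nhds tendsto_id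
    have h1 : Tendsto (fun x : ℝ => (A₁ + B₁ / x) / (A₂ + B₂ / x)) atTop
        (nhds ((A₁ + 0) / (A₂ + 0))) :=
      (tendsto_const_nhds.add hb1).div (tendsto_const_nhds.add hb2)
        (by simpa using hA₂.ne')
    rw [add_zero, add_zero] at h1
    apply h1.congr'
    filter_upwards [eventually_gt_atTop (0:ℝ), haff2.eventually (eventually_gt_atTop (0:ℝ))]
      with x hx hx2
    field_simp
  have hΔ : Tendsto (fun x : ℝ => Real.log (A₁ * x + B₁) - Real.log (A₂ * x + B₂))
      atTop (nhds (Real.log (A₁ / A₂))) := by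
    have hc : Tendsto (fun x : ℝ => Real.log ((A₁ * x + B₁) / (A₂ * x + B₂)))
        atTop (nhds (Real.log (A₁ / A₂))) :=
      ((Real.continuousAt_log (div_pos hA₁ hA₂).ne').tendsto).comp hr
    apply hc.congr'
    filter_upwards [haff1.eventually (eventually_gt_atTop (0:ℝ)),
      haff2.eventually (eventually_gt_atTop (0:ℝ))] with x h1 h2
    exact Real.log_div h1.ne' h2.ne'
  set C : ℝ := |Real.log (A₁ / A₂)| + 1 with hC
  have hΔbound : ∀ᶠ x in atTop,
      |Real.log (A₁ * x + B₁) - Real.log (A₂ * x + B₂)| < C :=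
    hΔ.abs.eventually_lt_const (by simp [hC])
  have hfg : ∀ᶠ x in atTop, |f x - g x| ≤ C := by
    filter_upwards [hlog1.eventually (eventually_ge_atTop M'),
      hlog2.eventually (eventually_ge_atTop M'), hΔbound] with x h1 h2 h3
    exact le_trans (key2 _ _ h1 h2) h3.le
  have hgpos : ∀ᶠ x in atTop, (0:ℝ) < g x := hgtop.eventually (eventually_gt_atTop 0)
  have hquot : Tendsto (fun x => (f x - g x) / g x) atTop (nhds 0) := by
    rw [tendsto_zero_iff_abs_tendsto_zero]
    have hCg : Tendsto (fun x => C / g x) atTop (nhds 0) :=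
      Tendsto.div_atTop tendsto_const_nhds hgtop
    apply squeeze_zero' (Eventually.of_forall (fun x => abs_nonneg _)) _ hCg
    filter_upwards [hfg, hgpos] with x h1 h2
    rw [abs_div, abs_of_pos h2]
    gcongr
  have hfinal : Tendsto (fun x => (f x - g x) / g x + 1) atTop (nhds (0 + 1)) :=
    hquot.add tendsto_const_nhds
  rw [zero_add] at hfinal
  apply hfinal.congr'
  filter_upwards [hgpos] with x hx
  rw [div_add_one hx.ne', sub_add_cancel]
end
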